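/- Let $R \to S$ be a ring map that is injective and such that $R$ is a direct summand of $S$ as an $R$-module. If $S$ is a normal integral domain, $R$ is an integral domain, and $S$ is integral over $R$ with the same fraction field (i.e., $R \to S$ is the inclusion into the integral closure of $R$ in its fraction field), then $R = S$; in particular $R$ is integrally closed in its fraction field. -/

import Mathlib

/-- let `R` be an integral domain and `S` its integral closure in its fraction
field (so `R → S` is injective, `S` is a normal domain, `S` is integral over `R` with the
same fraction field). If `R` is a direct summand of `S` as an `R`-module (i.e. the inclusion
admits an `R`-linear retraction), then `R = S`; in particular `R` is integrally closed in
its fraction field. -/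
theorem eq_of_retraction_integral_closure
    (R : Type*) [CommRing R] [IsDomain R]
    (S : Type*) [CommRing S] [IsDomain S] [Algebra R S]
    [Algebra S (FractionRing R)] [Algebra R (FractionRing R)]
    [IsScalarTower R S (FractionRing R)]
    [IsIntegralClosure S R (FractionRing R)]
    [IsIntegrallyClosed S]
    (hinj : Function.Injective (algebraMap R S))
    (r : S →ₗ[R] R) (hr : ∀ x : R, r (algebraMap R S x) = x) :
    Function.Surjective (algebraMap R S) ∧ IsIntegrallyClosed R := by
  rename_i iSK iRK iTow iIC iSn
  have hSK : Function.Injective (algebraMap S (FractionRing R)) :=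
    IsIntegralClosure.algebraMap_injective S R (FractionRing R)
  clear iIC iRK
  have hcomp : ∀ x : R, algebraMap S (FractionRing R) (algebraMap R S x)
      = algebraMap R (FractionRing R) x := fun x => by
    rw [← IsScalarTower.algebraMap_apply R S (FractionRing R)]
  -- surjectivity
  have hsurj : Function.Surjective (algebraMap R S) := by
    intro s
    obtain ⟨⟨a, b⟩, hab⟩ := IsLocalization.surj (nonZeroDivisors R)
      (algebraMap S (FractionRing R) s)
    have hb : (b : R) ≠ 0 := nonZeroDivisors.coe_ne_zero b
    have hrb : (b : R) * r s = a := by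
      have key : (b : R) • s = algebraMap R S a := by
        apply hSK
        rw [Algebra.smul_def, map_mul, hcomp, hcomp, mul_comm]
        exact hab
      have := congrArg r key
      rwa [map_smul, hr, smul_eq_mul] at this
    refine ⟨r s, hSK ?_⟩
    have hbK : algebraMap R (FractionRing R) (b : R) ≠ 0 := by
      exact (IsFractionRing.to_map_eq_zero_iff (K := FractionRing R)).not.mpr hb
    apply mul_left_cancel₀ hbK
    rw [hcomp, ← map_mul, hrb, ← hab, mul_comm]
  refine ⟨hsurj, ?_⟩
  -- K is a fraction ring of S
  have hfrS : IsFractionRing S (FractionRing R) := by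
    constructor
    constructor
    · intro y
      have hy : algebraMap S (FractionRing R) y ≠ 0 := fun h => by
        exact nonZeroDivisors.coe_ne_zero y (hSK (by simpa using h))
      exact IsUnit.mk0 _ hy
    · intro z
      obtain ⟨⟨a, b⟩, hab⟩ := IsLocalization.surj (nonZeroDivisors R) z
      refine ⟨⟨algebraMap R S a, ⟨algebraMap R S b, ?_⟩⟩, ?_⟩
      · exact mem_nonZeroDivisors_of_ne_zero (fun h => nonZeroDivisors.coe_ne_zero b (hinj (by simpa using h)))
      · simpa [hcomp] using hab
    · intro x y h
      exact ⟨1, by simpa using hSK h⟩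
  rw [isIntegrallyClosed_iff (FractionRing R)]
  intro x hx
  have hxS : IsIntegral S x := IsIntegral.tower_top (A := S) hx
  obtain ⟨y, hy⟩ := IsIntegrallyClosed.isIntegral_iff.mp hxS
  obtain ⟨z, hz⟩ := hsurj y
  exact ⟨z, by rw [← hcomp, hz, hy]⟩
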